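/- Let f: T → ℝ on a finite graph ball (the sandpile odometer restriction) satisfy: f ≥ 0, |Δf| ≤ K on B(y, 2k) for a vertex y with f(y) = 0, where Δ is the graph Laplacian, and suppose φ(z) := E_y[τ] − E_z[τ] (τ the exit time of B(y,2k)) satisfies Δφ = 1 on B(y,2k), 0 ≤ φ ≤ c(2k)^β on B(y,2k), and the elliptic Harnack inequality holds with constant c'' for nonnegative harmonic functions on B(y,2k). Then f(z) ≤ c'' · c · 2^{β+1} · K · k^β for all z ∈ B(y,k). -/

import Mathlib

open Finset

/-- Maximum principle on `B2` for subharmonic `v` that is `≤ 0` on the boundary,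
using the existence of a bounded function `φ` with `Δφ = 1` on the interior. -/
lemma odometer_maxprin {V : Type*} [Fintype V] (nbr : V → Finset V)
    (hreg : ∀ x, (nbr x).card = 4) (B2 : Finset V) (φ : V → ℝ)
    (hφΔ : ∀ z, z ∈ B2 → nbr z ⊆ B2 → (1 / 4) * ∑ w ∈ nbr z, φ w - φ z = 1)
    (v : V → ℝ)
    (hv : ∀ z, z ∈ B2 → nbr z ⊆ B2 → v z ≤ (1 / 4) * ∑ w ∈ nbr z, v w)
    (hbd : ∀ z ∈ B2, ¬ nbr z ⊆ B2 → v z ≤ 0) :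
    ∀ z ∈ B2, v z ≤ 0 := by
  classical
  by_contra hcon
  push_neg at hcon
  obtain ⟨z0, hz0, hz0v⟩ := hcon
  have hne : B2.Nonempty := ⟨z0, hz0⟩
  set M := B2.sup' hne v with hM
  have hMpos : 0 < M := lt_of_lt_of_le hz0v (le_sup' v hz0)
  have hle : ∀ z ∈ B2, v z ≤ M := fun z hz => le_sup' v hz
  set S := B2.filter (fun z => M ≤ v z) with hS
  have hSne : S.Nonempty := by
    obtain ⟨z1, hz1, hz1e⟩ := exists_mem_eq_sup' hne v
    exact ⟨z1, mem_filter.mpr ⟨hz1, hz1e.le⟩⟩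
  have key : ∀ z ∈ S, nbr z ⊆ S := by
    intro z hz
    obtain ⟨hzB, hzM⟩ := mem_filter.mp hz
    have hvz : v z = M := le_antisymm (hle z hzB) hzM
    have hnb : nbr z ⊆ B2 := by
      by_contra hn
      have := hbd z hzB hn
      rw [hvz] at this
      linarith
    have hsum : (4 : ℝ) * M ≤ ∑ w ∈ nbr z, v w := by
      have := hv z hzB hnb
      rw [hvz] at this
      linarith
    have h1 : ∀ w ∈ nbr z, 0 ≤ M - v w := fun w hw => sub_nonneg.mpr (hle w (hnb hw))
    have hz0' : ∑ w ∈ nbr z, (M - v w) = 0 := by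
      have h2 : ∑ w ∈ nbr z, (M - v w) = 4 * M - ∑ w ∈ nbr z, v w := by
        rw [Finset.sum_sub_distrib, Finset.sum_const, hreg z]
        norm_num
      have h3 : (0 : ℝ) ≤ ∑ w ∈ nbr z, (M - v w) := Finset.sum_nonneg h1
      linarith
    intro w hw
    have := (Finset.sum_eq_zero_iff_of_nonneg h1).mp hz0' w hw
    exact mem_filter.mpr ⟨hnb hw, (sub_eq_zero.mp this).le⟩
  obtain ⟨z1, hz1, hz1e⟩ := exists_mem_eq_sup' hSne φ
  have hz1B : z1 ∈ B2 := (mem_filter.mp hz1).1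
  have hnbS : nbr z1 ⊆ S := key z1 hz1
  have hnbB : nbr z1 ⊆ B2 := fun w hw => (mem_filter.mp (hnbS hw)).1
  have hΔ := hφΔ z1 hz1B hnbB
  have hφle : ∑ w ∈ nbr z1, φ w ≤ 4 * φ z1 := by
    have hterm : ∀ w ∈ nbr z1, φ w ≤ φ z1 := fun w hw =>
      le_trans (le_sup' φ (hnbS hw)) hz1e.le
    calc ∑ w ∈ nbr z1, φ w ≤ ∑ _w ∈ nbr z1, φ z1 := Finset.sum_le_sum hterm
      _ = 4 * φ z1 := by rw [Finset.sum_const, hreg z1]; norm_num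
  linarith

/-- Solvability of the discrete Dirichlet problem on `B2`. -/
lemma odometer_dirichlet {V : Type*} [Fintype V] (nbr : V → Finset V)
    (hreg : ∀ x, (nbr x).card = 4) (B2 : Finset V) (φ : V → ℝ)
    (hφΔ : ∀ z, z ∈ B2 → nbr z ⊆ B2 → (1 / 4) * ∑ w ∈ nbr z, φ w - φ z = 1)
    (g : V → ℝ) :
    ∃ h : V → ℝ, (∀ z, ¬ (z ∈ B2 ∧ nbr z ⊆ B2) → h z = g z) ∧
      (∀ z, z ∈ B2 → nbr z ⊆ B2 → (1 / 4) * ∑ w ∈ nbr z, h w - h z = 0) := by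
  classical
  set P : V → Prop := fun z => z ∈ B2 ∧ nbr z ⊆ B2 with hP
  let L : (V → ℝ) →ₗ[ℝ] (V → ℝ) :=
    { toFun := fun u z => if P z then u z - (1 / 4) * ∑ w ∈ nbr z, u w else u z
      map_add' := by
        intro u v; funext z
        simp only [Pi.add_apply]
        split_ifs with hz
        · rw [Finset.sum_add_distrib]; ring
        · rfl
      map_smul' := by
        intro a u; funext z
        simp only [Pi.smul_apply, smul_eq_mul, RingHom.id_apply]
        split_ifs with hz
        · rw [← Finset.mul_sum]; ring
        · rfl }
  have hLdef : ∀ u z, L u z = if P z then u z - (1 / 4) * ∑ w ∈ nbr z, u w else u z :=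
    fun u z => rfl
  have hinj : Function.Injective L := by
    rw [← LinearMap.ker_eq_bot, LinearMap.ker_eq_bot']
    intro u hu
    have hu' : ∀ z, (if P z then u z - (1 / 4) * ∑ w ∈ nbr z, u w else u z) = 0 := by
      intro z
      have := congrFun hu z
      rwa [hLdef] at this
    have hb : ∀ z, ¬ P z → u z = 0 := by
      intro z hz; have := hu' z; rwa [if_neg hz] at this
    have hi : ∀ z, P z → u z = (1 / 4) * ∑ w ∈ nbr z, u w := by
      intro z hz; have := hu' z; rw [if_pos hz] at this; linarith
    have h1 : ∀ z ∈ B2, u z ≤ 0 := by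
      apply odometer_maxprin nbr hreg B2 φ hφΔ
      · intro z hz hn; exact (hi z ⟨hz, hn⟩).le
      · intro z hz hn; exact (hb z (fun hPz => hn hPz.2)).le
    have h2 : ∀ z ∈ B2, (fun z => -u z) z ≤ 0 := by
      apply odometer_maxprin nbr hreg B2 φ hφΔ
      · intro z hz hn
        have hsum : ∑ w ∈ nbr z, -u w = -∑ w ∈ nbr z, u w := by simp
        simp only [hsum]
        have := hi z ⟨hz, hn⟩
        linarith
      · intro z hz hn
        have := hb z (fun hPz => hn hPz.2)
        simp [this]
    funext z
    simp only [Pi.zero_apply]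
    by_cases hz : P z
    · have ha := h1 z hz.1
      have hb' := h2 z hz.1
      simp only at hb'
      linarith
    · exact hb z hz
  have hsurj : Function.Surjective L := (LinearMap.injective_iff_surjective).mp hinj
  obtain ⟨h, hh⟩ := hsurj (fun z => if P z then 0 else g z)
  have hh' : ∀ z, (if P z then h z - (1 / 4) * ∑ w ∈ nbr z, h w else h z)
      = if P z then 0 else g z := by
    intro z
    have := congrFun hh z
    rwa [hLdef] at this
  refine ⟨h, ?_, ?_⟩
  · intro z hz
    have := hh' z
    rwa [if_neg hz, if_neg hz] at this
  · intro z hz hn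
    have := hh' z
    rw [if_pos ⟨hz, hn⟩, if_pos ⟨hz, hn⟩] at this
    linarith

/-- Odometer growth bound via the maximum principle and Harnack inequality: if `f ≥ 0`
vanishes at `y`, `|Δf| ≤ K` on the interior of `B2 = B(y,2k)`, `φ` has `Δφ = 1` there
with `0 ≤ φ ≤ c(2k)^β` and `φ(y) = 0`, and the elliptic Harnack inequality holds with
constant `c''` on `B1 = B(y,k)`, then `f(z) ≤ c'' c 2^{β+1} K k^β` for all `z ∈ B1`. -/
theorem odometer_growth_bound {V : Type*} [Fintype V] (nbr : V → Finset V)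
    (hreg : ∀ x, (nbr x).card = 4)
    (B1 B2 : Finset V) (y : V) (hy : y ∈ B1)
    (hsub : ∀ z ∈ B1, z ∈ B2 ∧ nbr z ⊆ B2)
    (k : ℕ) (hk : 1 ≤ k) (K c c'' β : ℝ) (hK : 0 ≤ K) (hc : 0 ≤ c) (hc'' : 0 ≤ c'')
    (f φ : V → ℝ)
    (hf0 : ∀ z, 0 ≤ f z) (hfy : f y = 0)
    (hfΔ : ∀ z, z ∈ B2 → nbr z ⊆ B2 → |(1 / 4) * ∑ w ∈ nbr z, f w - f z| ≤ K)
    (hφΔ : ∀ z, z ∈ B2 → nbr z ⊆ B2 → (1 / 4) * ∑ w ∈ nbr z, φ w - φ z = 1)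
    (hφy : φ y = 0)
    (hφ : ∀ z ∈ B2, 0 ≤ φ z ∧ φ z ≤ c * (2 * (k : ℝ)) ^ β)
    (harnack : ∀ h : V → ℝ, (∀ z ∈ B2, 0 ≤ h z) →
      (∀ z, z ∈ B2 → nbr z ⊆ B2 → (1 / 4) * ∑ w ∈ nbr z, h w - h z = 0) →
      ∀ z ∈ B1, ∀ w ∈ B1, h z ≤ c'' * h w) :
    ∀ z ∈ B1, f z ≤ c'' * c * 2 ^ (β + 1) * K * (k : ℝ) ^ β := by
  classical
  have hyB2 : y ∈ B2 := (hsub y hy).1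
  set C : ℝ := c * (2 * (k : ℝ)) ^ β with hC
  have hC0 : 0 ≤ C := by
    apply mul_nonneg hc
    positivity
  -- harmonic extension of f + K φ
  obtain ⟨h, hhb, hhΔ⟩ := odometer_dirichlet nbr hreg B2 φ hφΔ (fun z => f z + K * φ z)
  -- Step A : f + Kφ ≤ h on B2
  have stepA : ∀ z ∈ B2, f z + K * φ z - h z ≤ 0 := by
    apply odometer_maxprin nbr hreg B2 φ hφΔ
    · intro z hz hn
      have hsum : ∑ w ∈ nbr z, (f w + K * φ w - h w)
          = ∑ w ∈ nbr z, f w + K * ∑ w ∈ nbr z, φ w - ∑ w ∈ nbr z, h w := by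
        rw [Finset.sum_sub_distrib, Finset.sum_add_distrib, Finset.mul_sum]
      have hfz := abs_le.mp (hfΔ z hz hn)
      have hφz := hφΔ z hz hn
      have hhz := hhΔ z hz hn
      rw [hsum]
      nlinarith [hfz.1, hfz.2]
    · intro z hz hn
      have := hhb z (fun hPz => hn hPz.2)
      rw [this]
      ring_nf
      simp
  -- Step B : 0 ≤ h on B2
  have stepB : ∀ z ∈ B2, 0 ≤ h z := by
    have : ∀ z ∈ B2, (fun z => -h z) z ≤ 0 := by
      apply odometer_maxprin nbr hreg B2 φ hφΔ
      · intro z hz hn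
        have hsum : ∑ w ∈ nbr z, -h w = -∑ w ∈ nbr z, h w := by simp
        simp only [hsum]
        have := hhΔ z hz hn
        linarith
      · intro z hz hn
        have heq := hhb z (fun hPz => hn hPz.2)
        have h1 := hf0 z
        have h2 := (hφ z hz).1
        simp only [heq]
        nlinarith
    intro z hz
    have := this z hz
    simp only at this
    linarith
  -- Step C : h ≤ f - Kφ + 2KC on B2
  have stepC : ∀ z ∈ B2, h z - f z + K * φ z - 2 * K * C ≤ 0 := by
    apply odometer_maxprin nbr hreg B2 φ hφΔ
    · intro z hz hn
      have hsum : ∑ w ∈ nbr z, (h w - f w + K * φ w - 2 * K * C)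
          = ∑ w ∈ nbr z, h w - ∑ w ∈ nbr z, f w + K * ∑ w ∈ nbr z, φ w
            - 4 * (2 * K * C) := by
        rw [show (fun w => h w - f w + K * φ w - 2 * K * C)
            = fun w => (h w - f w + K * φ w) - 2 * K * C from rfl]
        rw [Finset.sum_sub_distrib, Finset.sum_add_distrib, Finset.sum_sub_distrib,
          Finset.mul_sum, Finset.sum_const, hreg z]
        norm_num
      have hfz := abs_le.mp (hfΔ z hz hn)
      have hφz := hφΔ z hz hn
      have hhz := hhΔ z hz hn
      rw [hsum]
      nlinarith [hfz.1, hfz.2]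
    · intro z hz hn
      have heq := hhb z (fun hPz => hn hPz.2)
      have h2 := (hφ z hz).2
      rw [heq]
      have : (2 : ℝ) * K * φ z ≤ 2 * K * C := by
        apply mul_le_mul_of_nonneg_left h2
        linarith
      linarith
  -- value at y
  have hhy : h y ≤ 2 * K * C := by
    have := stepC y hyB2
    rw [hfy, hφy] at this
    linarith
  -- Harnack
  intro z hz
  have hzB2 : z ∈ B2 := (hsub z hz).1
  have hharn := harnack h stepB hhΔ z hz y hy
  have hfh : f z ≤ h z := by
    have h1 := stepA z hzB2
    have h2 := (hφ z hzB2).1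
    nlinarith
  have hfinal : f z ≤ c'' * (2 * K * C) := by
    have : c'' * h y ≤ c'' * (2 * K * C) := mul_le_mul_of_nonneg_left hhy hc''
    linarith
  -- rewrite the constant
  have hconst : c'' * (2 * K * C) = c'' * c * 2 ^ (β + 1) * K * (k : ℝ) ^ β := by
    rw [hC]
    have hk0 : (0 : ℝ) ≤ (k : ℝ) := Nat.cast_nonneg k
    rw [Real.mul_rpow (by norm_num) hk0, Real.rpow_add (by norm_num : (0:ℝ) < 2),
      Real.rpow_one]
    ring
  linarith [hconst ▸ hfinal]
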